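/- Let W : ℝ → ℝ be a 1-periodic, even, Lipschitz function with Lipschitz constant 1, let γ > 0 and T, S ∈ ℝ with T < S. Let (y_i) be an orbit of the linearized scheme with parameter T and initial datum y₀, and let (z_i) be an orbit of the linearized scheme with parameter S and initial datum z₀. If z₀ ≤ y₀, then z_i ≤ y_i for every i ∈ ℕ. -/
import Mathlib


/-- An orbit of the linearized minimizing-movement scheme with parameter `T` and
spatial/temporal ratio `γ`: each `y (i+1)` is a global minimizer over `ℝ` of
`t ↦ T * t + W t + γ / 2 * (t - y i) ^ 2`. -/
def IsOrbit (W : ℝ → ℝ) (γ T : ℝ) (y : ℕ → ℝ) : Prop :=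
  ∀ i : ℕ, ∀ t : ℝ,
    T * y (i + 1) + W (y (i + 1)) + γ / 2 * (y (i + 1) - y i) ^ 2 ≤
      T * t + W t + γ / 2 * (t - y i) ^ 2

theorem stmt_6 (W : ℝ → ℝ) (hper : Function.Periodic W 1) (heven : ∀ x : ℝ, W (-x) = W x)
    (hlip : LipschitzWith 1 W)
    (γ : ℝ) (hγ : 0 < γ) (T S : ℝ) (hTS : T < S)
    (y z : ℕ → ℝ) (hy : IsOrbit W γ T y) (hz : IsOrbit W γ S z)
    (h0 : z 0 ≤ y 0) :
    ∀ i : ℕ, z i ≤ y i := by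
  intro i
  induction i with
  | zero => exact h0
  | succ i ih =>
    by_contra h
    push_neg at h
    have h1 := hy i (z (i + 1))
    have h2 := hz i (y (i + 1))
    nlinarith [mul_pos (sub_pos.mpr hTS) (sub_pos.mpr h),
      mul_nonneg (mul_pos hγ (sub_pos.mpr h)).le (sub_nonneg.mpr ih)]
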